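/- arXiv:2203.05363 — 2 statements merged into one kernel-verified Lean document; each statement's English description precedes it below -/
import Mathlib

section
/- The function (x,y) ↦ x^α / y^(α-1) is jointly convex on (0,∞) × (0,∞) for any α ≥ 1. -/
/-- The function `(x, y) ↦ x^α / y^(α-1)` is jointly convex on `(0,∞) × (0,∞)`
for any real `α ≥ 1`. -/
theorem convexOn_rpow_div_rpow (α : ℝ) (hα : 1 ≤ α) :
    ConvexOn ℝ (Set.Ioi (0 : ℝ) ×ˢ Set.Ioi (0 : ℝ))
      (fun p : ℝ × ℝ => p.1 ^ α / p.2 ^ (α - 1)) := by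
  have hrp := convexOn_rpow hα
  refine ⟨(convex_Ioi 0).prod (convex_Ioi 0), ?_⟩
  rintro ⟨x1, y1⟩ ⟨hx1, hy1⟩ ⟨x2, y2⟩ ⟨hx2, hy2⟩ a b ha hb hab
  simp only [Set.mem_Ioi] at hx1 hy1 hx2 hy2
  simp only [Prod.smul_mk, Prod.mk_add_mk, smul_eq_mul]
  have hYpos : 0 < a * y1 + b * y2 := by
    rcases eq_or_lt_of_le ha with h | h
    · have hb1 : b = 1 := by linarith
      rw [← h, hb1]; nlinarith
    · nlinarith [mul_nonneg hb hy2.le]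
  set Y : ℝ := a * y1 + b * y2 with hYdef
  set w1 : ℝ := a * y1 / Y with hw1def
  set w2 : ℝ := b * y2 / Y with hw2def
  set u : ℝ := x1 / y1 with hudef
  set v : ℝ := x2 / y2 with hvdef
  have hw1 : 0 ≤ w1 := div_nonneg (mul_nonneg ha hy1.le) hYpos.le
  have hw2 : 0 ≤ w2 := div_nonneg (mul_nonneg hb hy2.le) hYpos.le
  have hu : 0 ≤ u := div_nonneg hx1.le hy1.le
  have hv : 0 ≤ v := div_nonneg hx2.le hy2.le
  have hsum : w1 + w2 = 1 := by
    rw [hw1def, hw2def, ← add_div, ← hYdef, div_self hYpos.ne']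
  have key := hrp.2 (by exact hu) (by exact hv) hw1 hw2 hsum
  simp only [smul_eq_mul] at key
  have Snn : 0 ≤ w1 * u + w2 * v :=
    add_nonneg (mul_nonneg hw1 hu) (mul_nonneg hw2 hv)
  have eqA : a * x1 + b * x2 = Y * (w1 * u + w2 * v) := by
    rw [hw1def, hw2def, hudef, hvdef]
    field_simp
  have eq1 : (a * x1 + b * x2) ^ α / Y ^ (α - 1) = Y * (w1 * u + w2 * v) ^ α := by
    rw [eqA, Real.mul_rpow hYpos.le Snn, mul_div_right_comm,
      ← Real.rpow_sub hYpos]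
    norm_num
  have eqterm : ∀ x y c : ℝ, 0 < x → 0 < y → 0 ≤ c →
      Y * (c * y / Y * (x / y) ^ α) = c * (x ^ α / y ^ (α - 1)) := by
    intro x y c hx hy hc
    rw [Real.div_rpow hx.le hy.le, Real.rpow_sub hy, Real.rpow_one]
    have hyα : (0:ℝ) < y ^ α := Real.rpow_pos_of_pos hy α
    field_simp
  have eq2 : Y * (w1 * u ^ α + w2 * v ^ α)
      = a * (x1 ^ α / y1 ^ (α - 1)) + b * (x2 ^ α / y2 ^ (α - 1)) := by
    rw [mul_add, hw1def, hw2def, hudef, hvdef,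
      eqterm x1 y1 a hx1 hy1 ha, eqterm x2 y2 b hx2 hy2 hb]
  calc (a * x1 + b * x2) ^ α / Y ^ (α - 1)
      = Y * (w1 * u + w2 * v) ^ α := eq1
    _ ≤ Y * (w1 * u ^ α + w2 * v ^ α) :=
        mul_le_mul_of_nonneg_left key hYpos.le
    _ = _ := eq2
end

section
/- For the multinomial logit probabilities pᵢ = exp(zᵢ)/∑ⱼexp(zⱼ), the matrix T with Tᵢᵢ = pᵢ(1−pᵢ) and Tᵢⱼ = −pᵢpⱼ (i≠j) is positive semi-definite and satisfies T ≼ (1/2)·(I_c − (1/c)·𝟏_c 𝟏_cᵀ), where 𝟏_c is the all-ones vector in ℝ^c. -/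
open Finset Matrix

private lemma var_shift (c : ℕ) (p x : Fin c → ℝ) (hp1 : ∑ i, p i = 1) (t : ℝ) :
    ∑ i, p i * (x i - t)^2
      = ∑ i, p i * x i^2 - 2*t*(∑ i, p i * x i) + t^2 := by
  have h : ∀ i ∈ Finset.univ, p i * (x i - t)^2
      = p i * x i^2 - 2*t*(p i * x i) + t^2 * p i := fun i _ => by ring
  rw [Finset.sum_congr rfl h, Finset.sum_add_distrib, Finset.sum_sub_distrib,
    ← Finset.mul_sum, ← Finset.mul_sum, hp1, mul_one]

private lemma sum_sq_shift (c : ℕ) (x : Fin c → ℝ) (t : ℝ) :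
    ∑ i, (x i - t)^2 = ∑ i, x i^2 - 2*t*(∑ i, x i) + c*t^2 := by
  have h : ∀ i ∈ Finset.univ, (x i - t)^2
      = x i^2 - 2*t*(x i) + t^2 := fun i _ => by ring
  rw [Finset.sum_congr rfl h, Finset.sum_add_distrib, Finset.sum_sub_distrib,
    ← Finset.mul_sum, Finset.sum_const, Finset.card_univ, Fintype.card_fin,
    nsmul_eq_mul]

private lemma var_le_half (c : ℕ) (hc : 0 < c) (p x : Fin c → ℝ)
    (hp0 : ∀ i, 0 ≤ p i) (hp1 : ∑ i, p i = 1) :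
    ∑ i, p i * x i^2 - (∑ i, p i * x i)^2 ≤ (1/2) * ∑ i, x i^2 := by
  have hne : (Finset.univ : Finset (Fin c)).Nonempty := ⟨⟨0, hc⟩, mem_univ _⟩
  obtain ⟨a, -, ha⟩ := Finset.exists_max_image Finset.univ x hne
  obtain ⟨b, -, hb⟩ := Finset.exists_min_image Finset.univ x hne
  set t := (x a + x b)/2 with ht
  have h1 : ∑ i, p i * x i^2 - (∑ i, p i * x i)^2 ≤ ∑ i, p i * (x i - t)^2 := by
    rw [var_shift c p x hp1 t]
    nlinarith [sq_nonneg (t - ∑ i, p i * x i)]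
  have h2 : ∑ i, p i * (x i - t)^2 ≤ ((x a - x b)/2)^2 := by
    calc ∑ i, p i * (x i - t)^2 ≤ ∑ i, p i * ((x a - x b)/2)^2 := by
          apply Finset.sum_le_sum
          intro i _
          have h3 := ha i (mem_univ i)
          have h4 := hb i (mem_univ i)
          have h5 : (x i - t)^2 ≤ ((x a - x b)/2)^2 := by rw [ht]; nlinarith
          exact mul_le_mul_of_nonneg_left h5 (hp0 i)
      _ = ((x a - x b)/2)^2 := by rw [← Finset.sum_mul, hp1, one_mul]
  have h3 : ((x a - x b)/2)^2 ≤ (1/2) * ∑ i, x i^2 := by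
    rcases eq_or_ne a b with h | h
    · have hab : x a = x b := by rw [h]
      have hs : 0 ≤ ∑ i, x i^2 := Finset.sum_nonneg fun i _ => sq_nonneg _
      nlinarith
    · have hsum : x a^2 + x b^2 ≤ ∑ i, x i^2 := by
        have h6 := Finset.sum_le_sum_of_subset_of_nonneg
          (subset_univ ({a, b} : Finset (Fin c)))
          (fun i _ _ => sq_nonneg (x i))
        rwa [Finset.sum_pair h] at h6
      nlinarith [sq_nonneg (x a + x b)]
  linarith

/-- For the multinomial logit probabilities `pᵢ = exp(zᵢ)/∑ⱼ exp(zⱼ)`, the matrix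
`T = diag(p) − p pᵀ` is positive semi-definite and satisfies
`T ≼ (1/2)·(I_c − (1/c)·𝟏𝟏ᵀ)` in the Loewner order. -/
theorem multinomial_curvature_matrix_bound (c : ℕ) (hc : 0 < c) (z : Fin c → ℝ)
    (p : Fin c → ℝ) (hp : ∀ i, p i = Real.exp (z i) / ∑ j, Real.exp (z j))
    (T : Matrix (Fin c) (Fin c) ℝ)
    (hT : T = Matrix.of fun i j => if i = j then p i * (1 - p i) else -(p i * p j)) :
    T.PosSemidef ∧
      (((1 / 2 : ℝ) • ((1 : Matrix (Fin c) (Fin c) ℝ)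
          - ((c : ℝ))⁻¹ • (Matrix.of fun _ _ => (1 : ℝ)))) - T).PosSemidef := by
  have hne : (Finset.univ : Finset (Fin c)).Nonempty := ⟨⟨0, hc⟩, mem_univ _⟩
  have S_pos : 0 < ∑ j, Real.exp (z j) :=
    Finset.sum_pos (fun j _ => Real.exp_pos _) hne
  have hp0 : ∀ i, 0 ≤ p i := fun i => by rw [hp i]; positivity
  have hp1 : ∑ i, p i = 1 := by
    rw [Finset.sum_congr rfl (fun i _ => hp i), ← Finset.sum_div,
      div_self (ne_of_gt S_pos)]
  -- quadratic form of T
  have hform : ∀ x : Fin c → ℝ,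
      x ⬝ᵥ (T *ᵥ x) = ∑ i, p i * x i^2 - (∑ i, p i * x i)^2 := by
    intro x
    have hTx : ∀ i, (T *ᵥ x) i = p i * x i - p i * ∑ j, p j * x j := by
      intro i
      have hterm : ∀ j, T i j * x j
          = (if i = j then p i * x j else 0) - p i * (p j * x j) := by
        intro j
        rw [hT]
        simp only [Matrix.of_apply]
        split_ifs with h
        · subst h; ring
        · ring
      simp only [Matrix.mulVec, dotProduct]
      rw [Finset.sum_congr rfl fun j _ => hterm j, Finset.sum_sub_distrib,
        ← Finset.mul_sum]
      simp [Finset.sum_ite_eq]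
    have hx : x ⬝ᵥ (T *ᵥ x)
        = ∑ i, (p i * x i^2 - (∑ j, p j * x j) * (p i * x i)) := by
      simp only [dotProduct]
      refine Finset.sum_congr rfl fun i _ => ?_
      rw [hTx i]; ring
    rw [hx, Finset.sum_sub_distrib, ← Finset.mul_sum]
    ring
  have hTsymm : T.IsHermitian := by
    rw [hT]
    ext i j
    simp only [Matrix.conjTranspose_apply, Matrix.of_apply, star_trivial]
    rcases eq_or_ne i j with h | h
    · subst h; rfl
    · rw [if_neg h, if_neg (Ne.symm h)]; ring
  have hTpsd : T.PosSemidef := by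
    refine Matrix.PosSemidef.of_dotProduct_mulVec_nonneg hTsymm fun x => ?_
    have hstar : star x = x := by
      funext i; simp
    rw [hstar, hform x]
    have h := var_shift c p x hp1 (∑ i, p i * x i)
    have h2 : 0 ≤ ∑ i, p i * (x i - ∑ i, p i * x i)^2 :=
      Finset.sum_nonneg fun i _ => mul_nonneg (hp0 i) (sq_nonneg _)
    nlinarith
  refine ⟨hTpsd, ?_⟩
  have hc' : (c : ℝ) ≠ 0 := Nat.cast_ne_zero.mpr hc.ne'
  -- hermitian-ness of the difference matrix
  have hJh : (Matrix.of fun _ _ => (1 : ℝ) : Matrix (Fin c) (Fin c) ℝ).IsHermitian := by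
    ext i j; simp [Matrix.conjTranspose_apply]
  have hMh : (((1 / 2 : ℝ) • ((1 : Matrix (Fin c) (Fin c) ℝ)
      - ((c : ℝ))⁻¹ • (Matrix.of fun _ _ => (1 : ℝ)))) - T).IsHermitian := by
    ext i j
    have hTij : T j i = T i j := by
      have h := congrFun (congrFun hTsymm i) j
      simpa [Matrix.conjTranspose_apply] using h
    simp [Matrix.conjTranspose_apply, Matrix.sub_apply, Matrix.smul_apply,
      Matrix.one_apply, hTij, eq_comm]
  refine Matrix.PosSemidef.of_dotProduct_mulVec_nonneg hMh fun x => ?_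
  have hstar : star x = x := by funext i; simp
  rw [hstar]
  -- compute the quadratic form of the difference
  have hJx : x ⬝ᵥ ((Matrix.of fun _ _ => (1:ℝ) : Matrix (Fin c) (Fin c) ℝ) *ᵥ x)
      = (∑ i, x i)^2 := by
    simp only [Matrix.mulVec, dotProduct, Matrix.of_apply, one_mul]
    rw [← Finset.sum_mul, sq]
  have hIx : x ⬝ᵥ ((1 : Matrix (Fin c) (Fin c) ℝ) *ᵥ x) = ∑ i, x i^2 := by
    rw [Matrix.one_mulVec]
    simp only [dotProduct]
    exact Finset.sum_congr rfl fun i _ => (sq (x i)).symm ▸ (by ring)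
  have hMx : x ⬝ᵥ ((((1 / 2 : ℝ) • ((1 : Matrix (Fin c) (Fin c) ℝ)
      - ((c : ℝ))⁻¹ • (Matrix.of fun _ _ => (1 : ℝ)))) - T) *ᵥ x)
      = (1/2) * (∑ i, x i^2 - ((c:ℝ))⁻¹ * (∑ i, x i)^2)
        - (∑ i, p i * x i^2 - (∑ i, p i * x i)^2) := by
    rw [Matrix.sub_mulVec, dotProduct_sub, hform x,
      Matrix.smul_mulVec, dotProduct_smul,
      Matrix.sub_mulVec, dotProduct_sub,
      Matrix.smul_mulVec, dotProduct_smul, hJx, hIx]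
    simp only [smul_eq_mul]
  rw [hMx]
  -- apply the key inequality to the centered vector
  set s := ∑ i, x i with hs
  set y : Fin c → ℝ := fun i => x i - s / c with hy
  have hkey := var_le_half c hc p y hp0 hp1
  have h1 : ∑ i, p i * y i^2
      = ∑ i, p i * x i^2 - 2*(s/c)*(∑ i, p i * x i) + (s/c)^2 :=
    var_shift c p x hp1 (s/c)
  have h2 : ∑ i, p i * y i = (∑ i, p i * x i) - s/c := by
    have : ∀ i ∈ Finset.univ, p i * y i = p i * x i - (s/c) * p i :=
      fun i _ => by rw [hy]; ring
    rw [Finset.sum_congr rfl this, Finset.sum_sub_distrib, ← Finset.mul_sum, hp1,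
      mul_one]
  have h3 : ∑ i, y i^2 = ∑ i, x i^2 - 2*(s/c)*s + c*(s/c)^2 :=
    sum_sq_shift c x (s/c)
  have h4 : (c:ℝ)*(s/c)^2 = ((c:ℝ))⁻¹ * s^2 := by
    field_simp
  rw [h1, h2] at hkey
  rw [h3, h4] at hkey
  have hu : (s/(c:ℝ))*s = ((c:ℝ))⁻¹ * s^2 := by field_simp
  have hexp : ((∑ i, p i * x i) - s/(c:ℝ))^2
      = (∑ i, p i * x i)^2 - 2*(s/(c:ℝ))*(∑ i, p i * x i) + (s/(c:ℝ))^2 := by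
    ring
  linarith
end
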